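/- Every weighted ordered set partition cone is determined by its data: if (w,F) and (v,G) are weighted ordered set partitions of I and the translated cones cone(w,F) = w^F + cone(F) and cone(v,G) = v^G + cone(G) are equal as subsets of ℝ^I, then F = G and w = v. -/

import Mathlib

variable {I : Type*}

/-- An ordered set partition of the finite set `G`. -/
def IsOSP [DecidableEq I] (L : List (Finset I)) (G : Finset I) : Prop :=
  (∀ S ∈ L, S.Nonempty) ∧ L.Pairwise Disjoint ∧ L.foldr (· ∪ ·) ∅ = G

/-- The generators `e_i − e_j` with `i ∈ F_a`, `j ∈ F_b`, `a ≥ b`, of the cone of an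
ordered set partition `F = F₁|⋯|F_k`. -/
def ospGens [DecidableEq I] (L : List (Finset I)) : Set (I → ℝ) :=
  {v | ∃ a b : Fin L.length, b ≤ a ∧ ∃ i ∈ L.get a, ∃ j ∈ L.get b,
        v = Pi.single i (1 : ℝ) - Pi.single j 1}

/-- The cone of an ordered set partition: all nonnegative combinations of the generators. -/
def ospCone [DecidableEq I] [Fintype I] (L : List (Finset I)) : Set (I → ℝ) :=
  {x | ∃ (n : ℕ) (c : Fin n → ℝ) (g : Fin n → (I → ℝ)),
        (∀ t, 0 ≤ c t) ∧ (∀ t, g t ∈ ospGens L) ∧ x = ∑ t, c t • g t}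

/-- The translated cone `cone(w,F) = w^F + cone(F)`, where `w^F` is any vector whose
block sums are the weights `w(F_a)` (the `a`-th entry of the weight list). -/
def wospCone [DecidableEq I] [Fintype I] (L : List (Finset I)) (ws : List ℝ) :
    Set (I → ℝ) :=
  {x | ∃ v : I → ℝ, (∀ a : Fin L.length, ∑ i ∈ L.get a, v i = ws.getD a 0) ∧
        x - v ∈ ospCone L}

namespace Stmt19

variable [DecidableEq I] [Fintype I]
set_option linter.unusedSectionVars false

/-- Union of the first `m` blocks. -/
def pU (F : List (Finset I)) (m : ℕ) : Finset I :=
  (Finset.range m).biUnion (fun b => F.getD b ∅)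

lemma mem_pU {F : List (Finset I)} {m : ℕ} {i : I} :
    i ∈ pU F m ↔ ∃ b < m, i ∈ F.getD b ∅ := by
  simp [pU]

lemma mem_foldr {L : List (Finset I)} {i : I} :
    i ∈ L.foldr (· ∪ ·) ∅ ↔ ∃ b < L.length, i ∈ L.getD b ∅ := by
  induction L with
  | nil => simp
  | cons h t ih =>
    simp only [List.foldr_cons, Finset.mem_union, ih, List.length_cons]
    constructor
    · rintro (hi | ⟨b, hb, hib⟩)
      · exact ⟨0, Nat.succ_pos _, hi⟩
      · exact ⟨b + 1, Nat.succ_lt_succ hb, hib⟩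
    · rintro ⟨b, hb, hib⟩
      cases b with
      | zero => exact Or.inl hib
      | succ b => exact Or.inr ⟨b, Nat.lt_of_succ_lt_succ hb, hib⟩

lemma getD_eq_get {F : List (Finset I)} {b : ℕ} (hb : b < F.length) :
    F.getD b ∅ = F.get ⟨b, hb⟩ := by
  simp [List.getD_eq_getElem?_getD, List.getElem?_eq_getElem hb, List.get_eq_getElem]

lemma disj_get {F : List (Finset I)} (hd : F.Pairwise Disjoint) {a b : Fin F.length}
    (hab : a ≠ b) : Disjoint (F.get a) (F.get b) := by
  rcases lt_or_gt_of_ne hab with hlt | hgt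
  · exact List.pairwise_iff_get.mp hd a b hlt
  · exact (List.pairwise_iff_get.mp hd b a hgt).symm

lemma block_eq {F : List (Finset I)} (hd : F.Pairwise Disjoint) {a b : Fin F.length} {i : I}
    (ha : i ∈ F.get a) (hb : i ∈ F.get b) : a = b := by
  by_contra hab
  exact Finset.disjoint_left.mp (disj_get hd hab) ha hb

lemma mem_pU_iff_lt {F : List (Finset I)} (hF : IsOSP F Finset.univ) {a : Fin F.length} {i : I}
    (hi : i ∈ F.get a) {m : ℕ} : i ∈ pU F m ↔ (a : ℕ) < m := by
  rw [mem_pU]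
  constructor
  · rintro ⟨b, hbm, hib⟩
    have hbl : b < F.length := by
      by_contra hb
      rw [List.getD_eq_default _ _ (le_of_not_gt hb)] at hib
      exact absurd hib (Finset.notMem_empty i)
    rw [getD_eq_get hbl] at hib
    have := block_eq hF.2.1 hib hi
    simpa [← this] using hbm
  · intro h
    exact ⟨a, h, by rw [getD_eq_get a.isLt]; exact hi⟩

lemma pU_length {F : List (Finset I)} (hF : IsOSP F Finset.univ) :
    pU F F.length = Finset.univ := by
  ext i
  simp only [mem_pU, ← mem_foldr, hF.2.2, Finset.mem_univ]

lemma pU_mono {F : List (Finset I)} {m m' : ℕ} (h : m ≤ m') : pU F m ⊆ pU F m' := by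
  intro i hi
  rw [mem_pU] at hi ⊢
  obtain ⟨b, hb, hib⟩ := hi
  exact ⟨b, lt_of_lt_of_le hb h, hib⟩

lemma pU_ne {F : List (Finset I)} (hF : IsOSP F Finset.univ) {m m' : ℕ}
    (h : m < m') (hm' : m' ≤ F.length) : pU F m ≠ pU F m' := by
  have hm : m < F.length := lt_of_lt_of_le h hm'
  obtain ⟨i, hi⟩ := hF.1 (F.get ⟨m, hm⟩) (F.get_mem _)
  intro heq
  have h1 : i ∈ pU F m' := (mem_pU_iff_lt hF hi).mpr h
  have h2 : i ∉ pU F m := by rw [mem_pU_iff_lt hF hi]; exact lt_irrefl m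
  rw [heq] at h2
  exact h2 h1


lemma sum_single_sub {A : Finset I} (i j : I) :
    ∑ x ∈ A, ((Pi.single i (1 : ℝ) - Pi.single j 1 : I → ℝ)) x
      = (if i ∈ A then (1:ℝ) else 0) - (if j ∈ A then (1:ℝ) else 0) := by
  simp only [Pi.sub_apply, Finset.sum_sub_distrib, Pi.single_apply]
  rw [Finset.sum_ite_eq' A i (fun _ => (1:ℝ)), Finset.sum_ite_eq' A j (fun _ => (1:ℝ))]

lemma gen_sum_nonpos {F : List (Finset I)} (hF : IsOSP F Finset.univ) {m : ℕ}
    {g : I → ℝ} (hg : g ∈ ospGens F) : ∑ i ∈ pU F m, g i ≤ 0 := by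
  obtain ⟨a, b, hba, i, hi, j, hj, rfl⟩ := hg
  rw [sum_single_sub]
  by_cases him : i ∈ pU F m
  · have ha : (a : ℕ) < m := (mem_pU_iff_lt hF hi).mp him
    have hjm : j ∈ pU F m := (mem_pU_iff_lt hF hj).mpr (lt_of_le_of_lt hba ha)
    simp [him, hjm]
  · rw [if_neg him]
    split_ifs <;> norm_num

/-- Sum of a vector with prescribed block sums over a prefix union. -/
lemma sum_pU_of_blocks {F : List (Finset I)} {u : List ℝ} (hF : IsOSP F Finset.univ)
    {w : I → ℝ} (hw : ∀ a : Fin F.length, ∑ i ∈ F.get a, w i = u.getD a 0)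
    {m : ℕ} (hm : m ≤ F.length) :
    ∑ i ∈ pU F m, w i = ∑ b ∈ Finset.range m, u.getD b 0 := by
  rw [pU, Finset.sum_biUnion]
  · refine Finset.sum_congr rfl (fun b hb => ?_)
    have hbl : b < F.length := lt_of_lt_of_le (Finset.mem_range.mp hb) hm
    rw [getD_eq_get hbl]
    exact hw ⟨b, hbl⟩
  · intro a ha b hb hab
    have hal : a < F.length := lt_of_lt_of_le (Finset.mem_range.mp ha) hm
    have hbl : b < F.length := lt_of_lt_of_le (Finset.mem_range.mp hb) hm
    rw [Function.onFun, getD_eq_get hal, getD_eq_get hbl]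
    exact disj_get hF.2.1 (by simpa [Fin.ext_iff] using hab)

/-- Key upper bound: on the weighted cone, the sum over a prefix union is bounded by the
partial sum of the weights. -/
lemma sum_le {F : List (Finset I)} {u : List ℝ} (hF : IsOSP F Finset.univ) {m : ℕ}
    (hm : m ≤ F.length) {x : I → ℝ} (hx : x ∈ wospCone F u) :
    ∑ i ∈ pU F m, x i ≤ ∑ b ∈ Finset.range m, u.getD b 0 := by
  obtain ⟨v, hv, n, c, g, hc, hg, hxv⟩ := hx
  have hx' : ∀ i, x i = v i + ∑ t, c t * g t i := by
    intro i
    have := congrFun hxv i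
    simp only [Pi.sub_apply, Finset.sum_apply, Pi.smul_apply, smul_eq_mul] at this
    linarith
  calc ∑ i ∈ pU F m, x i = ∑ i ∈ pU F m, v i + ∑ t, c t * ∑ i ∈ pU F m, g t i := by
        simp only [hx', Finset.sum_add_distrib]
        rw [Finset.sum_comm]
        simp [Finset.mul_sum]
    _ ≤ ∑ i ∈ pU F m, v i := by
        have : ∑ t, c t * ∑ i ∈ pU F m, g t i ≤ 0 := by
          apply Finset.sum_nonpos
          intro t _
          exact mul_nonpos_of_nonneg_of_nonpos (hc t) (gen_sum_nonpos hF (hg t))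
        linarith
    _ = ∑ b ∈ Finset.range m, u.getD b 0 := sum_pU_of_blocks hF hv hm

/-- A base vector with the prescribed block sums. -/
noncomputable def vbase (F : List (Finset I)) (u : List ℝ) : I → ℝ :=
  fun i => ∑ a : Fin F.length, if i ∈ F.get a then u.getD a 0 / (F.get a).card else 0

lemma vbase_block_sum {F : List (Finset I)} {u : List ℝ} (hF : IsOSP F Finset.univ)
    (b : Fin F.length) : ∑ i ∈ F.get b, vbase F u i = u.getD b 0 := by
  unfold vbase
  rw [Finset.sum_comm]
  rw [Finset.sum_eq_single b]
  · have hne : (F.get b).Nonempty := hF.1 _ (F.get_mem _)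
    have hcard : ((F.get b).card : ℝ) ≠ 0 := by
      exact_mod_cast Finset.card_ne_zero_of_mem hne.choose_spec
    rw [Finset.sum_congr rfl (fun i hi => if_pos hi), Finset.sum_const]
    rw [nsmul_eq_mul]; field_simp
  · intro a _ hab
    apply Finset.sum_eq_zero
    intro i hi
    rw [if_neg]
    exact fun hia => Finset.disjoint_left.mp (disj_get hF.2.1 hab) hia hi
  · simp

lemma vbase_mem {F : List (Finset I)} {u : List ℝ} (hF : IsOSP F Finset.univ) :
    vbase F u ∈ wospCone F u := by
  refine ⟨vbase F u, fun a => vbase_block_sum hF a, 0, Fin.elim0, Fin.elim0,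
    (fun t => t.elim0), (fun t => t.elim0), ?_⟩
  simp

lemma vbase_add_mem {F : List (Finset I)} {u : List ℝ} (hF : IsOSP F Finset.univ)
    {t : ℝ} (ht : 0 ≤ t) {g : I → ℝ} (hg : g ∈ ospGens F) :
    vbase F u + t • g ∈ wospCone F u := by
  refine ⟨vbase F u, fun a => vbase_block_sum hF a, 1, (fun _ => t), (fun _ => g),
    (fun _ => ht), (fun _ => hg), ?_⟩
  simp

/-- If `A` is not a prefix union, there is a generator whose sum over `A` is `1`. -/
lemma exists_gen {F : List (Finset I)} (hF : IsOSP F Finset.univ) {A : Finset I}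
    (hA : ∀ m ≤ F.length, A ≠ pU F m) :
    ∃ g ∈ ospGens F, ∑ i ∈ A, g i = 1 := by
  classical
  have key : ∃ (a b : Fin F.length), b ≤ a ∧ ∃ i ∈ F.get a, ∃ j ∈ F.get b,
      i ∈ A ∧ j ∉ A := by
    by_cases hcase : ∀ c : Fin F.length, F.get c ⊆ A ∨ ∀ i ∈ F.get c, i ∉ A
    · by_cases hdc : ∀ a b : Fin F.length, b ≤ a → F.get a ⊆ A → F.get b ⊆ A
      · exfalso
        by_cases hex : ∃ b : ℕ, b < F.length ∧ ¬ F.getD b ∅ ⊆ A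
        · set m := Nat.find hex with hmdef
          obtain ⟨hml, hmn⟩ := Nat.find_spec hex
          refine hA m (le_of_lt hml) ?_
          ext i
          rw [mem_pU]
          constructor
          · intro hi
            have : i ∈ Finset.univ := Finset.mem_univ i
            rw [← hF.2.2, mem_foldr] at this
            obtain ⟨c, hcl, hic⟩ := this
            rw [getD_eq_get hcl] at hic
            have hsub : F.get ⟨c, hcl⟩ ⊆ A := by
              rcases hcase ⟨c, hcl⟩ with hs | hd
              · exact hs
              · exact absurd hi (hd i hic)
            have hcm : c < m := by
              by_contra hge
              push_neg at hge
              apply hmn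
              rw [getD_eq_get hml]
              exact hdc ⟨c, hcl⟩ ⟨m, hml⟩ (by simpa using hge) hsub
            exact ⟨c, hcm, by rw [getD_eq_get hcl]; exact hic⟩
          · rintro ⟨b, hbm, hib⟩
            have hbl : b < F.length := by
              by_contra hb
              rw [List.getD_eq_default _ _ (le_of_not_gt hb)] at hib
              exact absurd hib (Finset.notMem_empty i)
            have : ¬ (b < F.length ∧ ¬ F.getD b ∅ ⊆ A) := Nat.find_min hex hbm
            push_neg at this
            exact this hbl hib
        · push_neg at hex
          refine hA F.length le_rfl ?_
          rw [pU_length hF]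
          ext i
          simp only [Finset.mem_univ, iff_true]
          have : i ∈ Finset.univ := Finset.mem_univ i
          rw [← hF.2.2, mem_foldr] at this
          obtain ⟨c, hcl, hic⟩ := this
          exact hex c hcl hic
      · push_neg at hdc
        obtain ⟨a, b, hba, hsub, hnsub⟩ := hdc
        rcases hcase b with hs | hd
        · exact absurd hs hnsub
        · obtain ⟨j, hj⟩ := hF.1 (F.get b) (F.get_mem _)
          obtain ⟨i, hi⟩ := hF.1 (F.get a) (F.get_mem _)
          exact ⟨a, b, hba, i, hi, j, hj, hsub hi, hd j hj⟩
    · push_neg at hcase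
      obtain ⟨c, hnsub, i, hic, hiA⟩ := hcase
      rw [Finset.not_subset] at hnsub
      obtain ⟨j, hjc, hjA⟩ := hnsub
      exact ⟨c, c, le_refl c, i, hic, j, hjc, hiA, hjA⟩
  obtain ⟨a, b, hba, i, hi, j, hj, hiA, hjA⟩ := key
  refine ⟨Pi.single i (1:ℝ) - Pi.single j 1, ⟨a, b, hba, i, hi, j, hj, rfl⟩, ?_⟩
  rw [sum_single_sub]
  simp [hiA, hjA]

lemma unbounded {F : List (Finset I)} {u : List ℝ} (hF : IsOSP F Finset.univ) {A : Finset I}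
    (hA : ∀ m ≤ F.length, A ≠ pU F m) (M : ℝ) :
    ∃ x ∈ wospCone F u, M < ∑ i ∈ A, x i := by
  obtain ⟨g, hg, hg1⟩ := exists_gen hF hA
  set t : ℝ := max (M - ∑ i ∈ A, vbase F u i + 1) 0 with htdef
  refine ⟨vbase F u + t • g, vbase_add_mem hF (le_max_right _ _) hg, ?_⟩
  have hsum : ∑ i ∈ A, (vbase F u + t • g) i = ∑ i ∈ A, vbase F u i + t := by
    simp only [Pi.add_apply, Pi.smul_apply, smul_eq_mul, Finset.sum_add_distrib,
      ← Finset.mul_sum, hg1, mul_one]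
  rw [hsum]
  have := le_max_left (M - ∑ i ∈ A, vbase F u i + 1) 0
  linarith

/-- Boundedness characterization: the prefix unions are exactly the subsets on which the
coordinate-sum functional is bounded above on the weighted cone. -/
lemma bdd_iff {F : List (Finset I)} {u : List ℝ} (hF : IsOSP F Finset.univ) (A : Finset I) :
    (∃ M : ℝ, ∀ x ∈ wospCone F u, ∑ i ∈ A, x i ≤ M) ↔ ∃ m ≤ F.length, A = pU F m := by
  constructor
  · intro hbdd
    by_contra hA
    push_neg at hA
    obtain ⟨M, hM⟩ := hbdd
    obtain ⟨x, hx, hMx⟩ := unbounded (u := u) hF hA M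
    exact absurd (hM x hx) (not_le.mpr hMx)
  · rintro ⟨m, hm, rfl⟩
    exact ⟨∑ b ∈ Finset.range m, u.getD b 0, fun x hx => sum_le hF hm hx⟩

lemma pU_succ_subset {F G : List (Finset I)} {m : ℕ} (hF : IsOSP F Finset.univ)
    (hch : ∀ A : Finset I, (∃ k ≤ F.length, A = pU F k) → ∃ k ≤ G.length, A = pU G k)
    (heq : pU F m = pU G m) (hmF : m + 1 ≤ F.length) :
    pU G (m + 1) ⊆ pU F (m + 1) := by
  obtain ⟨m', hm', he⟩ := hch (pU F (m + 1)) ⟨m + 1, hmF, rfl⟩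
  have hmm' : m + 1 ≤ m' := by
    by_contra hlt
    push_neg at hlt
    have h1 : pU F (m + 1) ⊆ pU F m := by
      calc pU F (m + 1) = pU G m' := he
        _ ⊆ pU G m := pU_mono (Nat.lt_succ_iff.mp hlt)
        _ = pU F m := heq.symm
    exact pU_ne hF (Nat.lt_succ_self m) hmF
      (Finset.Subset.antisymm (pU_mono (Nat.le_succ m)) h1)
  rw [he]
  exact pU_mono hmm'

lemma pU_eq_of_chain {F G : List (Finset I)} (hF : IsOSP F Finset.univ)
    (hG : IsOSP G Finset.univ)
    (hch : ∀ A : Finset I, (∃ k ≤ F.length, A = pU F k) ↔ ∃ k ≤ G.length, A = pU G k) :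
    ∀ m, m ≤ F.length → m ≤ G.length → pU F m = pU G m := by
  intro m
  induction m with
  | zero => intro _ _; simp [pU]
  | succ m ih =>
    intro hmF hmG
    have heq : pU F m = pU G m :=
      ih (le_of_lt (Nat.lt_of_succ_le hmF)) (le_of_lt (Nat.lt_of_succ_le hmG))
    refine Finset.Subset.antisymm ?_ ?_
    · exact pU_succ_subset hG (fun A hA => (hch A).mpr hA) heq.symm hmG
    · exact pU_succ_subset hF (fun A hA => (hch A).mp hA) heq hmF

lemma len_le_of_chain {F G : List (Finset I)} (hF : IsOSP F Finset.univ)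
    (hG : IsOSP G Finset.univ)
    (hch : ∀ A : Finset I, (∃ k ≤ F.length, A = pU F k) ↔ ∃ k ≤ G.length, A = pU G k) :
    F.length ≤ G.length := by
  by_contra hlt
  push_neg at hlt
  have h1 : pU F G.length = pU G G.length :=
    pU_eq_of_chain hF hG hch G.length (le_of_lt hlt) le_rfl
  exact pU_ne hF hlt le_rfl (by rw [h1, pU_length hG, pU_length hF])

lemma get_eq_sdiff {F : List (Finset I)} (hF : IsOSP F Finset.univ) (a : Fin F.length) :
    F.get a = pU F ((a : ℕ) + 1) \ pU F (a : ℕ) := by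
  ext i
  rw [Finset.mem_sdiff]
  constructor
  · intro hi
    rw [mem_pU_iff_lt hF hi, mem_pU_iff_lt hF hi]
    omega
  · rintro ⟨h1, h2⟩
    rw [mem_pU] at h1 h2
    push_neg at h2
    obtain ⟨b, hb, hib⟩ := h1
    have hbl : b < F.length := by
      by_contra hbge
      rw [List.getD_eq_default _ _ (le_of_not_gt hbge)] at hib
      exact absurd hib (Finset.notMem_empty i)
    have hba : b = (a : ℕ) := by
      by_contra hne
      exact h2 b (by omega) hib
    rw [hba, getD_eq_get a.isLt] at hib
    exact hib

end Stmt19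

/-- A weighted ordered set partition cone determines its data: if `(u,F)` and `(v,G)` are
weighted ordered set partitions of `I` whose translated cones agree as subsets of `ℝ^I`,
then `F = G` and `u = v`. -/
theorem stmt19 [Fintype I] [DecidableEq I]
    (F G : List (Finset I)) (u v : List ℝ)
    (hF : IsOSP F Finset.univ) (hG : IsOSP G Finset.univ)
    (hu : u.length = F.length) (hv : v.length = G.length)
    (h : wospCone F u = wospCone G v) :
    F = G ∧ u = v := by
  classical
  have hchain : ∀ A : Finset I,
      (∃ k ≤ F.length, A = Stmt19.pU F k) ↔ ∃ k ≤ G.length, A = Stmt19.pU G k := by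
    intro A
    rw [← Stmt19.bdd_iff (u := u) hF A, ← Stmt19.bdd_iff (u := v) hG A, h]
  have hlen : F.length = G.length :=
    le_antisymm (Stmt19.len_le_of_chain hF hG hchain)
      (Stmt19.len_le_of_chain hG hF (fun A => (hchain A).symm))
  have hpU : ∀ m, m ≤ F.length → Stmt19.pU F m = Stmt19.pU G m := fun m hm =>
    Stmt19.pU_eq_of_chain hF hG hchain m hm (hlen ▸ hm)
  have hFG : F = G := by
    apply List.ext_get hlen
    intro n h1 h2
    rw [Stmt19.get_eq_sdiff hF ⟨n, h1⟩, Stmt19.get_eq_sdiff hG ⟨n, h2⟩]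
    simp only []
    rw [hpU n (le_of_lt h1), hpU (n + 1) h1]
  subst hFG
  refine ⟨rfl, ?_⟩
  have hsum : ∀ m, m ≤ F.length →
      ∑ b ∈ Finset.range m, u.getD b 0 = ∑ b ∈ Finset.range m, v.getD b 0 := by
    intro m hm
    apply le_antisymm
    · have h1 : Stmt19.vbase F u ∈ wospCone F v := by
        rw [← h]; exact Stmt19.vbase_mem hF
      have h2 := Stmt19.sum_le hF hm h1
      rwa [Stmt19.sum_pU_of_blocks hF (fun a => Stmt19.vbase_block_sum hF a) hm] at h2
    · have h1 : Stmt19.vbase F v ∈ wospCone F u := by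
        rw [h]; exact Stmt19.vbase_mem hF
      have h2 := Stmt19.sum_le hF hm h1
      rwa [Stmt19.sum_pU_of_blocks hF (fun a => Stmt19.vbase_block_sum hF a) hm] at h2
  have hgetD : ∀ b, b < F.length → u.getD b 0 = v.getD b 0 := by
    intro b hb
    have e1 := hsum b (le_of_lt hb)
    have e2 := hsum (b + 1) hb
    rw [Finset.sum_range_succ, Finset.sum_range_succ] at e2
    linarith
  apply List.ext_getElem (hu.trans (hv.symm))
  intro n h1 h2
  have hn : n < F.length := hu ▸ h1
  have := hgetD n hn
  rwa [List.getD_eq_getElem _ _ h1, List.getD_eq_getElem _ _ h2] at this
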